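/- Let R be a standard graded k-algebra with Hilbert series H_R(s) = 1 + es + rs^2 (so R_j = 0 for j ≥ 3). If there exists a nonzero graded R-module M with a linear resolution and Hilbert series H_M(s) = p s^d + q s^{d+1} with p ≠ 0, then the formal power series identity P^R_M(s,t) · H_R(-st) = (-t)^{-d} H_M(-st) forces q ≤ vp, where v = (e + √(e²−4r))/2. -/

import Mathlib

/-- A standard graded `k`-algebra structure on `R`, recorded via a family of
`k`-submodules `𝒜 j` (the graded components): `R = ⊕ 𝒜 j`, `𝒜 j = 0` for `j < 0`,
`𝒜 0 = k·1`, `R` is generated in degree one, and all components are finite dimensional. -/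
structure IsStandardGraded (k : Type*) [Field k] (R : Type*) [CommRing R] [Algebra k R]
    (𝒜 : ℤ → Submodule k R) : Prop where
  internal : DirectSum.IsInternal 𝒜
  one_mem : (1 : R) ∈ 𝒜 0
  mul_mem : ∀ ⦃i j : ℤ⦄ ⦃x y : R⦄, x ∈ 𝒜 i → y ∈ 𝒜 j → x * y ∈ 𝒜 (i + j)
  bot_of_neg : ∀ i : ℤ, i < 0 → 𝒜 i = ⊥
  deg_zero : 𝒜 0 = Submodule.span k {(1 : R)}
  gen_in_deg_one : ∀ i : ℤ, 0 ≤ i → 𝒜 (i + 1) = 𝒜 1 * 𝒜 i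
  finite_dim : ∀ i : ℤ, FiniteDimensional k (𝒜 i)

/-- A grading on an `R`-module `M` compatible with a grading `𝒜` on `R`,
with finite-dimensional components. -/
structure IsGradedModule (k : Type*) [Field k] (R : Type*) [CommRing R] [Algebra k R]
    (𝒜 : ℤ → Submodule k R) (M : Type*) [AddCommGroup M] [Module R M] [Module k M]
    [IsScalarTower k R M] (ℳ : ℤ → Submodule k M) : Prop where
  internal : DirectSum.IsInternal ℳ
  smul_mem : ∀ ⦃i j : ℤ⦄ ⦃x : R⦄ ⦃m : M⦄, x ∈ 𝒜 i → m ∈ ℳ j → x • m ∈ ℳ (i + j)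
  finite_dim : ∀ j : ℤ, FiniteDimensional k (ℳ j)

/-- A linear (minimal, degree-`d`) free resolution of the graded `R`-module `M`:
an exact complex `⋯ → R(−d−n−1)^{β (n+1)} → R(−d−n)^{β n} → ⋯ → R(−d)^{β 0} → M → 0`
in which every differential is given by a matrix with entries in `R₁ = 𝒜 1`, and the
generators of the `n`-th free module map to degree `d + n`. Its existence says exactly
that `M` is a linear module with `indeg M = d` (a Koszul module when `d = 0`). -/
structure LinearResolution (k : Type*) [Field k] (R : Type*) [CommRing R] [Algebra k R]
    (𝒜 : ℤ → Submodule k R) (M : Type*) [AddCommGroup M] [Module R M] [Module k M]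
    [IsScalarTower k R M] (ℳ : ℤ → Submodule k M) (d : ℤ) where
  β : ℕ → ℕ
  dd : ∀ n : ℕ, (Fin (β (n + 1)) → R) →ₗ[R] (Fin (β n) → R)
  aug : (Fin (β 0) → R) →ₗ[R] M
  aug_surjective : Function.Surjective aug
  aug_deg : ∀ i, aug (Pi.single i 1) ∈ ℳ d
  dd_linear : ∀ (n : ℕ) (i : Fin (β (n + 1))) (j : Fin (β n)),
    dd n (Pi.single i 1) j ∈ 𝒜 1
  exact_aug : Function.Exact (dd 0) aug
  exact_dd : ∀ n : ℕ, Function.Exact (dd (n + 1)) (dd n)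

/-- `R` is a Koszul algebra: the residue field `k = R/R₊ = R/(R₁)` has a linear
free resolution over `R`. -/
def IsKoszulAlgebra (k : Type*) [Field k] (R : Type*) [CommRing R] [Algebra k R]
    (𝒜 : ℤ → Submodule k R) : Prop :=
  Nonempty (LinearResolution k R 𝒜 (R ⧸ Ideal.span (𝒜 1 : Set R))
    (fun j => (𝒜 j).map ((Ideal.span (𝒜 1 : Set R)).mkQ.restrictScalars k)) 0)


section Proj
variable {k : Type*} [Field k] {V : Type*} [AddCommGroup V] [Module k V]

/-- Projection onto the `j`-th component of an internal direct sum decomposition. -/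
noncomputable def projC (𝒱 : ℤ → Submodule k V) (h : DirectSum.IsInternal 𝒱) (j : ℤ) :
    V →ₗ[k] V where
  toFun x := ((LinearEquiv.ofBijective (DirectSum.coeLinearMap 𝒱) h).symm x j : V)
  map_add' x y := by simp
  map_smul' c x := by simp [DirectSum.smul_apply]

lemma projC_mem (𝒱 : ℤ → Submodule k V) (h : DirectSum.IsInternal 𝒱) (j : ℤ) (x : V) :
    projC 𝒱 h j x ∈ 𝒱 j := SetLike.coe_mem _

lemma projC_same (𝒱 : ℤ → Submodule k V) (h : DirectSum.IsInternal 𝒱) {j : ℤ} {x : V}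
    (hx : x ∈ 𝒱 j) : projC 𝒱 h j x = x := by
  simp [projC, h.ofBijective_coeLinearMap_of_mem hx]

lemma projC_ne (𝒱 : ℤ → Submodule k V) (h : DirectSum.IsInternal 𝒱) {i j : ℤ} (hij : i ≠ j)
    {x : V} (hx : x ∈ 𝒱 i) : projC 𝒱 h j x = 0 := by
  simp [projC, h.ofBijective_coeLinearMap_of_mem_ne hij hx]

/-- Two `k`-linear maps agreeing on all graded components agree. -/
lemma eq_of_homog {W : Type*} [AddCommGroup W] [Module k W]
    (𝒱 : ℤ → Submodule k V) (h : DirectSum.IsInternal 𝒱)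
    (L1 L2 : V →ₗ[k] W) (hh : ∀ (i : ℤ), ∀ x ∈ 𝒱 i, L1 x = L2 x) (x : V) : L1 x = L2 x := by
  have hx : x ∈ ⨆ i, 𝒱 i := by rw [h.submodule_iSup_eq_top]; trivial
  exact Submodule.iSup_induction 𝒱 (motive := fun y => L1 y = L2 y) hx hh (by simp) (fun a b ha hb => by simp [map_add, ha, hb])

end Proj

section Graded
variable {k R M : Type*} [Field k] [CommRing R] [Algebra k R]
    [AddCommGroup M] [Module R M] [Module k M] [IsScalarTower k R M]
    {𝒜 : ℤ → Submodule k R} {ℳ : ℤ → Submodule k M}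

lemma apply_eq_sum {N N' : ℕ} (f : (Fin N → R) →ₗ[R] (Fin N' → R)) (y : Fin N → R)
    (s : Fin N') : f y s = ∑ i, y i * f (Pi.single i 1) s := by
  conv_lhs => rw [← Finset.univ_sum_single y]
  rw [map_sum, Finset.sum_apply]
  refine Finset.sum_congr rfl fun i _ => ?_
  have h1 : Pi.single i (y i) = y i • (Pi.single i (1 : R) : Fin N → R) := by
    funext t
    by_cases h : t = i <;> simp [Pi.single_apply, h]
  rw [h1, map_smul, Pi.smul_apply, smul_eq_mul]

lemma aug_eq_sum {N : ℕ} (f : (Fin N → R) →ₗ[R] M) (y : Fin N → R) :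
    f y = ∑ i, y i • f (Pi.single i 1) := by
  conv_lhs => rw [← Finset.univ_sum_single y]
  rw [map_sum]
  refine Finset.sum_congr rfl fun i _ => ?_
  have h1 : Pi.single i (y i) = y i • (Pi.single i (1 : R) : Fin N → R) := by
    funext t
    by_cases h : t = i <;> simp [Pi.single_apply, h]
  rw [h1, map_smul]

lemma coord_mem (hR : IsStandardGraded k R 𝒜) {N N' : ℕ}
    (f : (Fin N → R) →ₗ[R] (Fin N' → R)) (hf : ∀ i s, f (Pi.single i 1) s ∈ 𝒜 1)
    {j j' : ℤ} (hj : j + 1 = j') (x : Fin N → R) (hx : ∀ i, x i ∈ 𝒜 j) (s : Fin N') :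
    f x s ∈ 𝒜 j' := by
  subst hj
  rw [apply_eq_sum]
  exact Submodule.sum_mem _ fun i _ => hR.mul_mem (hx i) (hf i s)

lemma aug_mem (hM : IsGradedModule k R 𝒜 M ℳ) {N : ℕ} {d : ℤ}
    (f : (Fin N → R) →ₗ[R] M) (hf : ∀ i, f (Pi.single i 1) ∈ ℳ d)
    {j t : ℤ} (ht : j + d = t) (x : Fin N → R) (hx : ∀ i, x i ∈ 𝒜 j) :
    f x ∈ ℳ t := by
  subst ht
  rw [aug_eq_sum]
  exact Submodule.sum_mem _ fun i _ => hM.smul_mem (hx i) (hf i)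

lemma exists_restrict (hR : IsStandardGraded k R 𝒜) {N N' : ℕ}
    (f : (Fin N → R) →ₗ[R] (Fin N' → R)) (hf : ∀ i s, f (Pi.single i 1) s ∈ 𝒜 1)
    {j j' : ℤ} (hj : j + 1 = j') :
    ∃ F : (Fin N → 𝒜 j) →ₗ[k] (Fin N' → 𝒜 j'),
      ∀ x s, (F x s : R) = f (fun i => (x i : R)) s := by
  refine ⟨LinearMap.pi (fun s => LinearMap.codRestrict (𝒜 j')
    ((LinearMap.proj s).comp ((f.restrictScalars k).comp
      (LinearMap.pi (fun i => (𝒜 j).subtype.comp (LinearMap.proj i)))))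
    (fun x => coord_mem hR f hf hj _ (fun i => (x i).2) s)), fun x s => rfl⟩

lemma exists_restrict_aug (hM : IsGradedModule k R 𝒜 M ℳ) {N : ℕ} {d : ℤ}
    (f : (Fin N → R) →ₗ[R] M) (hf : ∀ i, f (Pi.single i 1) ∈ ℳ d)
    {j t : ℤ} (ht : j + d = t) :
    ∃ F : (Fin N → 𝒜 j) →ₗ[k] (ℳ t),
      ∀ x, (F x : M) = f (fun i => (x i : R)) := by
  refine ⟨LinearMap.codRestrict (ℳ t) ((f.restrictScalars k).comp
      (LinearMap.pi (fun i => (𝒜 j).subtype.comp (LinearMap.proj i))))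
    (fun x => aug_mem hM f hf ht _ (fun i => (x i).2)), fun x => rfl⟩

lemma projC_mul (hR : IsStandardGraded k R 𝒜) {c : R} (hc : c ∈ 𝒜 1)
    {j j' : ℤ} (hj : j + 1 = j') (a : R) :
    projC 𝒜 hR.internal j' (a * c) = projC 𝒜 hR.internal j a * c := by
  subst hj
  refine eq_of_homog 𝒜 hR.internal
    ((projC 𝒜 hR.internal (j + 1)).comp (LinearMap.mulRight k c))
    ((LinearMap.mulRight k c).comp (projC 𝒜 hR.internal j)) (fun i x hx => ?_) a
  simp only [LinearMap.comp_apply, LinearMap.mulRight_apply]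
  by_cases h : i = j
  · subst h
    rw [projC_same 𝒜 hR.internal (hR.mul_mem hx hc), projC_same 𝒜 hR.internal hx]
  · rw [projC_ne 𝒜 hR.internal (by omega : i + 1 ≠ j + 1) (hR.mul_mem hx hc),
      projC_ne 𝒜 hR.internal h hx, zero_mul]

lemma projM_smul (hR : IsStandardGraded k R 𝒜) (hM : IsGradedModule k R 𝒜 M ℳ)
    {d : ℤ} {m₀ : M} (hm : m₀ ∈ ℳ d) {j t : ℤ} (ht : j + d = t) (a : R) :
    projC ℳ hM.internal t (a • m₀) = (projC 𝒜 hR.internal j a) • m₀ := by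
  subst ht
  refine eq_of_homog 𝒜 hR.internal
    ((projC ℳ hM.internal (j + d)).comp
      ((LinearMap.toSpanSingleton R M m₀).restrictScalars k))
    ((LinearMap.toSpanSingleton R M m₀).restrictScalars k ∘ₗ (projC 𝒜 hR.internal j))
    (fun i x hx => ?_) a
  simp only [LinearMap.comp_apply, LinearMap.restrictScalars_apply,
    LinearMap.toSpanSingleton_apply]
  by_cases h : i = j
  · subst h
    rw [projC_same ℳ hM.internal (hM.smul_mem hx hm), projC_same 𝒜 hR.internal hx]
  · rw [projC_ne ℳ hM.internal (by omega : i + d ≠ j + d) (hM.smul_mem hx hm),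
      projC_ne 𝒜 hR.internal h hx, zero_smul]

lemma projC_map_coord (hR : IsStandardGraded k R 𝒜) {N N' : ℕ}
    (f : (Fin N → R) →ₗ[R] (Fin N' → R)) (hf : ∀ i s, f (Pi.single i 1) s ∈ 𝒜 1)
    {j j' : ℤ} (hj : j + 1 = j') (y : Fin N → R) (s : Fin N') :
    projC 𝒜 hR.internal j' (f y s) = f (fun i => projC 𝒜 hR.internal j (y i)) s := by
  rw [apply_eq_sum f y s, map_sum, apply_eq_sum f _ s]
  exact Finset.sum_congr rfl fun i _ => projC_mul hR (hf i s) hj _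

lemma projM_map (hR : IsStandardGraded k R 𝒜) (hM : IsGradedModule k R 𝒜 M ℳ)
    {N : ℕ} {d : ℤ} (f : (Fin N → R) →ₗ[R] M) (hf : ∀ i, f (Pi.single i 1) ∈ ℳ d)
    {j t : ℤ} (ht : j + d = t) (y : Fin N → R) :
    projC ℳ hM.internal t (f y) = f (fun i => projC 𝒜 hR.internal j (y i)) := by
  rw [aug_eq_sum f y, map_sum, aug_eq_sum f (fun i => projC 𝒜 hR.internal j (y i))]
  exact Finset.sum_congr rfl fun i _ => projM_smul hR hM (hf i) ht _

end Graded

set_option maxHeartbeats 1000000 in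
lemma key_arith (e r p q : ℕ) (β : ℕ → ℕ) (hdisc : 4 * r ≤ e ^ 2)
    (h0 : β 0 = p) (h1 : e * p = β 1 + q)
    (hrec : ∀ n, e * β (n + 1) = β (n + 2) + r * β n) :
    (q : ℝ) ≤ (e + Real.sqrt ((e : ℝ) ^ 2 - 4 * r)) / 2 * p := by
  obtain ⟨s, hs_def⟩ : ∃ s : ℝ, s = Real.sqrt ((e : ℝ) ^ 2 - 4 * r) := ⟨_, rfl⟩
  rw [← hs_def]
  have hdisc' : (0 : ℝ) ≤ (e : ℝ) ^ 2 - 4 * r := by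
    have : ((4 * r : ℕ) : ℝ) ≤ ((e ^ 2 : ℕ) : ℝ) := Nat.cast_le.mpr hdisc
    push_cast at this
    linarith
  have hs0 : 0 ≤ s := hs_def ▸ Real.sqrt_nonneg _
  have hs2 : s ^ 2 = (e : ℝ) ^ 2 - 4 * r := hs_def ▸ Real.sq_sqrt hdisc'
  have hse : s ≤ e := by
    nlinarith [Nat.cast_nonneg (α := ℝ) e, Nat.cast_nonneg (α := ℝ) r]
  obtain ⟨u, hu_def⟩ : ∃ u : ℝ, u = ((e : ℝ) - s) / 2 := ⟨_, rfl⟩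
  obtain ⟨v, hv_def⟩ : ∃ v : ℝ, v = ((e : ℝ) + s) / 2 := ⟨_, rfl⟩
  rw [show ((e : ℝ) + s) / 2 = v from hv_def.symm]
  have hu0 : 0 ≤ u := by rw [hu_def]; linarith
  have huv : u ≤ v := by rw [hu_def, hv_def]; linarith
  have hsum : u + v = e := by rw [hu_def, hv_def]; ring
  have hprod : u * v = r := by rw [hu_def, hv_def]; nlinarith [hs2]
  have hb0 : ∀ n, 0 ≤ ((β n : ℕ) : ℝ) := fun n => Nat.cast_nonneg _
  have hbrec : ∀ n, (e : ℝ) * ((β (n + 1) : ℕ) : ℝ) = ((β (n + 2) : ℕ) : ℝ) + r * ((β n : ℕ) : ℝ) := by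
    intro n
    have : ((e : ℝ)) * (β (n + 1) : ℝ) = (β (n + 2) : ℝ) + (r : ℝ) * (β n : ℝ) := by
      exact_mod_cast hrec n
    exact this
  have hbp : ((β 0 : ℕ) : ℝ) = p := by exact_mod_cast congrArg (Nat.cast : ℕ → ℝ) h0
  have hbq : (q : ℝ) = e * p - ((β 1 : ℕ) : ℝ) := by
    have : ((e : ℝ)) * (p : ℝ) = (β 1 : ℝ) + (q : ℝ) := by exact_mod_cast h1
    linarith
  rw [hbq]
  have key : u * p ≤ ((β 1 : ℕ) : ℝ) := by
    by_contra hcon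
    push_neg at hcon
    obtain ⟨γ, hγ_def⟩ : ∃ g : ℝ, g = ((β 1 : ℕ) : ℝ) - u * ((β 0 : ℕ) : ℝ) := ⟨_, rfl⟩
    have hγ : γ < 0 := by rw [hγ_def, hbp]; linarith
    have hv0 : 0 < v := by
      by_contra h
      push_neg at h
      have hu' : u = 0 := le_antisymm (huv.trans h) hu0
      have : 0 ≤ γ := by rw [hγ_def, hu']; simpa using hb0 1
      linarith
    have claimA : ∀ n, ((β (n + 1) : ℕ) : ℝ) = u * ((β n : ℕ) : ℝ) + v ^ n * γ := by
      intro n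
      induction n with
      | zero => rw [hγ_def]; ring
      | succ m ih =>
        have h2 : (u + v) * ((β (m + 1) : ℕ) : ℝ) = ((β (m + 2) : ℕ) : ℝ) + u * v * ((β m : ℕ) : ℝ) := by
          rw [hsum, hprod]; exact hbrec m
        have h3 : ((β (m + 2) : ℕ) : ℝ) = (u + v) * ((β (m + 1) : ℕ) : ℝ) - u * v * ((β m : ℕ) : ℝ) := by linarith
        show ((β (m + 2) : ℕ) : ℝ) = u * ((β (m + 1) : ℕ) : ℝ) + v ^ (m + 1) * γ
        rw [h3, ih]
        ring
    have claimB : ∀ n, ((β n : ℕ) : ℝ) ≤ v ^ n * (((β 0 : ℕ) : ℝ) + n * (γ / v)) := by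
      intro n
      induction n with
      | zero => simp
      | succ m ih =>
        have hA := claimA m
        have hvpow : 0 < v ^ m := pow_pos hv0 m
        have step1 : ((β (m + 1) : ℕ) : ℝ) ≤ v * ((β m : ℕ) : ℝ) + v ^ m * γ := by
          rw [hA]
          nlinarith [hb0 m]
        have step2 : v * ((β m : ℕ) : ℝ) ≤ v * (v ^ m * (((β 0 : ℕ) : ℝ) + m * (γ / v))) :=
          mul_le_mul_of_nonneg_left ih hv0.le
        have hgv : v ^ m * γ = v ^ (m + 1) * (γ / v) := by
          field_simp
          ring
        calc ((β (m + 1) : ℕ) : ℝ) ≤ v * (v ^ m * (((β 0 : ℕ) : ℝ) + (m : ℝ) * (γ / v))) + v ^ m * γ :=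
              step1.trans (add_le_add step2 le_rfl)
          _ = v ^ (m + 1) * (((β 0 : ℕ) : ℝ) + (m : ℝ) * (γ / v)) + v ^ (m + 1) * (γ / v) := by
              rw [hgv]; ring
          _ = v ^ (m + 1) * (((β 0 : ℕ) : ℝ) + ((m + 1 : ℕ) : ℝ) * (γ / v)) := by push_cast; ring
    obtain ⟨n, hn⟩ := exists_nat_gt (((β 0 : ℕ) : ℝ) * v / (-γ))
    have h1' : ((β 0 : ℕ) : ℝ) * v < n * (-γ) := by
      rwa [div_lt_iff₀ (neg_pos.mpr hγ)] at hn
    have hc : n * (γ / v) * v = n * γ := by field_simp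
    have hneg : ((β 0 : ℕ) : ℝ) + n * (γ / v) < 0 := by nlinarith [h1', hc, hv0]
    have hB := claimB n
    have hvpow : 0 < v ^ n := pow_pos hv0 n
    have hfin : v ^ n * (((β 0 : ℕ) : ℝ) + n * (γ / v)) < 0 :=
      mul_neg_of_pos_of_neg hvpow hneg
    linarith [hb0 n]
  have hep : (e : ℝ) * p = u * p + v * p := by rw [← hsum]; ring
  linarith

section Blocks
variable {k R M : Type*} [Field k] [CommRing R] [Algebra k R]
    [AddCommGroup M] [Module R M] [Module k M] [IsScalarTower k R M]
    {𝒜 : ℤ → Submodule k R} {ℳ : ℤ → Submodule k M}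

lemma range_restrict (hR : IsStandardGraded k R 𝒜) {N N' : ℕ}
    (f : (Fin N → R) →ₗ[R] (Fin N' → R)) (hf : ∀ i s, f (Pi.single i 1) s ∈ 𝒜 1)
    {j j' : ℤ} (hj : j + 1 = j') (x : Fin N' → R) (hx : ∀ s, x s ∈ 𝒜 j')
    (hr : x ∈ Set.range f) :
    ∃ y : Fin N → R, (∀ i, y i ∈ 𝒜 j) ∧ f y = x := by
  obtain ⟨y, hy⟩ := hr
  refine ⟨fun i => projC 𝒜 hR.internal j (y i), fun i => projC_mem _ _ _ _, ?_⟩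
  funext s
  rw [← projC_map_coord hR f hf hj y s, hy]
  exact projC_same _ _ (hx s)

lemma range_restrict_aug (hR : IsStandardGraded k R 𝒜) (hM : IsGradedModule k R 𝒜 M ℳ)
    {N : ℕ} {d : ℤ} (f : (Fin N → R) →ₗ[R] M) (hf : ∀ i, f (Pi.single i 1) ∈ ℳ d)
    {j t : ℤ} (ht : j + d = t) (m : M) (hm : m ∈ ℳ t) (hr : m ∈ Set.range f) :
    ∃ y : Fin N → R, (∀ i, y i ∈ 𝒜 j) ∧ f y = m := by
  obtain ⟨y, hy⟩ := hr
  refine ⟨fun i => projC 𝒜 hR.internal j (y i), fun i => projC_mem _ _ _ _, ?_⟩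
  rw [← projM_map hR hM f hf ht y, hy]
  exact projC_same _ _ hm

lemma zero_of_homog_in_range (hR : IsStandardGraded k R 𝒜) {N N' : ℕ}
    (f : (Fin N → R) →ₗ[R] (Fin N' → R)) (hf : ∀ i s, f (Pi.single i 1) s ∈ 𝒜 1)
    (x : Fin N' → R) (hx : ∀ s, x s ∈ 𝒜 0) (hr : x ∈ Set.range f) : x = 0 := by
  obtain ⟨y, hmem, hy⟩ := range_restrict hR f hf
    (show (-1 : ℤ) + 1 = 0 by norm_num) x hx hr
  have hy0 : y = 0 := funext fun i => by
    have h := hmem i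
    rw [hR.bot_of_neg (-1) (by norm_num)] at h
    simpa using h
  rw [← hy, hy0, map_zero]

end Blocks

set_option maxHeartbeats 1000000 in
/-- For a short standard graded algebra with Hilbert series
`1 + e s + r s²` admitting a nonzero linear module `M` with Hilbert series
`p s^d + q s^{d+1}` (`p ≠ 0`), the Poincaré-series identity forces
`q ≤ v p` with `v = (e + √(e²−4r))/2`. -/
theorem stmt0 {k R M : Type*} [Field k] [CommRing R] [Algebra k R]
    [AddCommGroup M] [Module R M] [Module k M] [IsScalarTower k R M]
    (𝒜 : ℤ → Submodule k R) (ℳ : ℤ → Submodule k M)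
    (hR : IsStandardGraded k R 𝒜) (hM : IsGradedModule k R 𝒜 M ℳ)
    (e r : ℕ) (he : Module.finrank k (𝒜 1) = e) (hr : Module.finrank k (𝒜 2) = r)
    (hshort : ∀ i : ℤ, 3 ≤ i → 𝒜 i = ⊥)
    (hdisc : 4 * r ≤ e ^ 2)
    (d : ℤ) (p q : ℕ) (hp : p ≠ 0)
    (hMd : Module.finrank k (ℳ d) = p) (hMd1 : Module.finrank k (ℳ (d + 1)) = q)
    (hconc : ∀ j : ℤ, j ≠ d → j ≠ d + 1 → ℳ j = ⊥)
    (hlin : Nonempty (LinearResolution k R 𝒜 M ℳ d)) :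
    (q : ℝ) ≤ (e + Real.sqrt ((e : ℝ) ^ 2 - 4 * r)) / 2 * p := by
  obtain ⟨F⟩ := hlin
  haveI := hR.finite_dim (0 : ℤ)
  haveI := hR.finite_dim (1 : ℤ)
  haveI := hR.finite_dim (2 : ℤ)
  haveI := hM.finite_dim d
  haveI := hM.finite_dim (d + 1)
  -- R is nontrivial
  have hone : (1 : R) ≠ 0 := by
    intro h
    have hm0 : ∀ m : M, m = 0 := fun m => by
      calc m = (1 : R) • m := (one_smul R m).symm
        _ = (0 : R) • m := by rw [h]
        _ = 0 := zero_smul R m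
    have hsub : Subsingleton (ℳ d) :=
      ⟨fun a b => Subtype.ext (by rw [hm0 (a : M), hm0 (b : M)])⟩
    have hzero : Module.finrank k (ℳ d) = 0 := by
      haveI := hsub
      exact Module.finrank_zero_of_subsingleton
    rw [hMd] at hzero
    exact hp hzero
  have hA0dim : Module.finrank k (𝒜 0) = 1 := by
    rw [hR.deg_zero]
    exact finrank_span_singleton hone
  have hpi : ∀ (N : ℕ) (j : ℤ) (_ : FiniteDimensional k (𝒜 j)),
      Module.finrank k (Fin N → 𝒜 j) = N * Module.finrank k (𝒜 j) := by
    intro N j hfd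
    rw [Module.finrank_pi_fintype]
    simp [Finset.sum_const, Finset.card_univ]
  -- homogeneous elements of degree 2 in free modules are in the image of the differential
  have hddzero : ∀ (n : ℕ) (x : Fin (F.β n) → R), (∀ s, x s ∈ 𝒜 2) →
      x ∈ Set.range (F.dd n) := by
    intro n x hx
    match n with
    | 0 =>
      have haug : F.aug x = 0 := by
        have hmem := aug_mem hM F.aug F.aug_deg (rfl : (2 : ℤ) + d = 2 + d) x hx
        rw [hconc (2 + d) (by omega) (by omega)] at hmem
        simpa using hmem
      exact (F.exact_aug x).mp haug
    | (n' + 1) =>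
      have hdd : F.dd n' x = 0 := by
        funext s
        have hmem := coord_mem hR (F.dd n') (F.dd_linear n')
          (show (2 : ℤ) + 1 = 3 by norm_num) x hx s
        rw [hshort 3 (by norm_num)] at hmem
        simpa using hmem
      exact (F.exact_dd n' x).mp hdd
  -- the recurrence e * β (n+1) = β (n+2) + r * β n
  have hrec : ∀ n : ℕ, e * F.β (n + 1) = F.β (n + 2) + r * F.β n := by
    intro n
    obtain ⟨G, hG⟩ := exists_restrict hR (F.dd (n + 1)) (F.dd_linear (n + 1))
      (show (0 : ℤ) + 1 = 1 by norm_num)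
    obtain ⟨Fm, hFm⟩ := exists_restrict hR (F.dd n) (F.dd_linear n)
      (show (1 : ℤ) + 1 = 2 by norm_num)
    have hGinj : Function.Injective G := by
      rw [← LinearMap.ker_eq_bot]
      apply (Submodule.eq_bot_iff _).mpr
      intro x hx
      have hx0 : G x = 0 := LinearMap.mem_ker.mp hx
      have hxe : (fun s => (x s : R)) = 0 := by
        apply zero_of_homog_in_range hR (F.dd (n + 2)) (F.dd_linear (n + 2)) _
          (fun s => (x s).2)
        apply (F.exact_dd (n + 1) _).mp
        funext s
        rw [← hG x s, hx0]
        simp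
      exact funext fun s => Subtype.ext (congrFun hxe s)
    have hFs : Function.Surjective Fm := by
      intro x
      obtain ⟨y, hmem, hy⟩ := range_restrict hR (F.dd n) (F.dd_linear n)
        (show (1 : ℤ) + 1 = 2 by norm_num) (fun s => (x s : R)) (fun s => (x s).2)
        (hddzero n _ (fun s => (x s).2))
      refine ⟨fun i => ⟨y i, hmem i⟩, ?_⟩
      funext s
      apply Subtype.ext
      rw [hFm]
      exact congrFun hy s
    have hker : LinearMap.ker Fm = LinearMap.range G := by
      apply le_antisymm
      · intro x hx
        have hx0 : F.dd n (fun s => (x s : R)) = 0 := by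
          funext s
          rw [← hFm x s, LinearMap.mem_ker.mp hx]
          simp
        obtain ⟨y, hmem, hy⟩ := range_restrict hR (F.dd (n + 1)) (F.dd_linear (n + 1))
          (show (0 : ℤ) + 1 = 1 by norm_num) (fun s => (x s : R)) (fun s => (x s).2)
          ((F.exact_dd n _).mp hx0)
        refine ⟨fun i => ⟨y i, hmem i⟩, ?_⟩
        funext s
        apply Subtype.ext
        rw [hG]
        exact congrFun hy s
      · rintro x ⟨z, rfl⟩
        apply LinearMap.mem_ker.mpr
        funext s
        apply Subtype.ext
        rw [hFm]
        have hzz : (fun i => ((G z i : R))) = F.dd (n + 1) (fun i => (z i : R)) :=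
          funext fun i => hG z i
        rw [hzz, Function.Exact.apply_apply_eq_zero (F.exact_dd n)]
        simp
    have h1 := LinearMap.finrank_range_add_finrank_ker Fm
    rw [LinearMap.range_eq_top.mpr hFs, finrank_top, hker,
      LinearMap.finrank_range_of_inj hGinj] at h1
    rw [hpi _ _ (hR.finite_dim 2), hpi _ _ (hR.finite_dim 0),
      hpi _ _ (hR.finite_dim 1), hA0dim, he, hr] at h1
    rw [mul_one] at h1
    calc e * F.β (n + 1) = F.β (n + 1) * e := mul_comm _ _
      _ = F.β n * r + F.β (n + 2) := h1.symm
      _ = F.β (n + 2) + r * F.β n := by rw [mul_comm]; ring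
  -- β 0 = p
  have hb0 : F.β 0 = p := by
    obtain ⟨A0, hA0⟩ := exists_restrict_aug hM F.aug F.aug_deg
      (show (0 : ℤ) + d = d by ring)
    have hinj : Function.Injective A0 := by
      rw [← LinearMap.ker_eq_bot]
      apply (Submodule.eq_bot_iff _).mpr
      intro x hx
      have hx0 : (A0 x : M) = 0 := by rw [LinearMap.mem_ker.mp hx]; simp
      have haug : F.aug (fun s => (x s : R)) = 0 := by rw [← hA0 x, hx0]
      have hxe : (fun s => (x s : R)) = 0 :=
        zero_of_homog_in_range hR (F.dd 0) (F.dd_linear 0) _ (fun s => (x s).2)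
          ((F.exact_aug _).mp haug)
      exact funext fun s => Subtype.ext (congrFun hxe s)
    have hsurj : Function.Surjective A0 := by
      intro m
      obtain ⟨y, hmem, hy⟩ := range_restrict_aug hR hM F.aug F.aug_deg
        (show (0 : ℤ) + d = d by ring) (m : M) m.2 (F.aug_surjective (m : M))
      exact ⟨fun i => ⟨y i, hmem i⟩, Subtype.ext (by rw [hA0]; exact hy)⟩
    have heq := LinearEquiv.finrank_eq (LinearEquiv.ofBijective A0 ⟨hinj, hsurj⟩)
    rw [hpi _ _ (hR.finite_dim 0), hA0dim, mul_one, hMd] at heq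
    exact heq
  -- e * p = β 1 + q
  have hb1 : e * p = F.β 1 + q := by
    obtain ⟨G0, hG0⟩ := exists_restrict hR (F.dd 0) (F.dd_linear 0)
      (show (0 : ℤ) + 1 = 1 by norm_num)
    obtain ⟨A1, hA1⟩ := exists_restrict_aug hM F.aug F.aug_deg
      (show (1 : ℤ) + d = d + 1 by ring)
    have hG0inj : Function.Injective G0 := by
      rw [← LinearMap.ker_eq_bot]
      apply (Submodule.eq_bot_iff _).mpr
      intro x hx
      have hx0 : G0 x = 0 := LinearMap.mem_ker.mp hx
      have hxe : (fun s => (x s : R)) = 0 := by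
        apply zero_of_homog_in_range hR (F.dd 1) (F.dd_linear 1) _ (fun s => (x s).2)
        apply (F.exact_dd 0 _).mp
        funext s
        rw [← hG0 x s, hx0]
        simp
      exact funext fun s => Subtype.ext (congrFun hxe s)
    have hA1surj : Function.Surjective A1 := by
      intro m
      obtain ⟨y, hmem, hy⟩ := range_restrict_aug hR hM F.aug F.aug_deg
        (show (1 : ℤ) + d = d + 1 by ring) (m : M) m.2 (F.aug_surjective (m : M))
      exact ⟨fun i => ⟨y i, hmem i⟩, Subtype.ext (by rw [hA1]; exact hy)⟩
    have hker : LinearMap.ker A1 = LinearMap.range G0 := by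
      apply le_antisymm
      · intro x hx
        have hx0 : F.aug (fun s => (x s : R)) = 0 := by
          rw [← hA1 x]
          rw [LinearMap.mem_ker.mp hx]
          simp
        obtain ⟨y, hmem, hy⟩ := range_restrict hR (F.dd 0) (F.dd_linear 0)
          (show (0 : ℤ) + 1 = 1 by norm_num) (fun s => (x s : R)) (fun s => (x s).2)
          ((F.exact_aug _).mp hx0)
        refine ⟨fun i => ⟨y i, hmem i⟩, ?_⟩
        funext s
        apply Subtype.ext
        rw [hG0]
        exact congrFun hy s
      · rintro x ⟨z, rfl⟩
        apply LinearMap.mem_ker.mpr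
        apply Subtype.ext
        rw [hA1]
        have hzz : (fun i => ((G0 z i : R))) = F.dd 0 (fun i => (z i : R)) :=
          funext fun i => hG0 z i
        rw [hzz, Function.Exact.apply_apply_eq_zero F.exact_aug]
        simp
    have h1 := LinearMap.finrank_range_add_finrank_ker A1
    rw [LinearMap.range_eq_top.mpr hA1surj, finrank_top, hker,
      LinearMap.finrank_range_of_inj hG0inj] at h1
    rw [hpi _ _ (hR.finite_dim 0), hpi _ _ (hR.finite_dim 1), hA0dim, he, hMd1,
      mul_one] at h1
    have h2 : q + F.β 1 = F.β 0 * e := h1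
    rw [hb0] at h2
    linarith [mul_comm e p, h2]
  exact key_arith e r p q F.β hdisc hb0 hb1 hrec
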